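/- Let A_1, …, A_n be events in a probability space and let m be an integer with 0 ≤ m ≤ n−1. Then Pr(⋃_{i=1}^n A_i) ≥ (1/(n−m)) · ( Σ_{k=1}^m (−1)^{k−1} · (C(m,k)/C(n,k)) · ((nk − (m+1)(k−1))/(m−k+1)) · Σ_{i_1<⋯<i_k} Pr(A_{i_1} ∩ ⋯ ∩ A_{i_k}) + (−1)^m · ((m+1)/C(n,m)) · Σ_{i_1<⋯<i_{m+1}} Pr(A_{i_1} ∩ ⋯ ∩ A_{i_{m+1}}) ), where C(n,k) denotes the binomial coefficient and the inner sums range over all strictly increasing index tuples from {1, …, n}. -/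

import Mathlib

open MeasureTheory Finset

private lemma padsum (f : ℕ → ℝ) {a b : ℕ} (hab : a ≤ b) (h0 : ∀ k, a ≤ k → k < b → f k = 0) :
    ∑ k ∈ Finset.range b, f k = ∑ k ∈ Finset.range a, f k := by
  refine (Finset.sum_subset (Finset.range_subset_range.2 hab) ?_).symm
  intro k hk hk'
  exact h0 k (by simp at hk'; omega) (by simp at hk; omega)

private lemma lemA : ∀ (t m n : ℕ), m ≤ n → t ≤ n →
    ∑ k ∈ Finset.range (t+1), (-1:ℝ)^k * (t.choose k) * ((n-k).choose (n-m)) =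
    ((n-t).choose m : ℝ) := by
  intro t
  induction t with
  | zero => intro m n hm _; simp [Nat.choose_symm hm]
  | succ t ih =>
    intro m n hm ht
    rcases Nat.eq_zero_or_pos m with rfl | hm0
    · rw [Finset.sum_eq_single 0]
      · simp
      · intro k hk hk0
        have h1 : (n - k).choose (n - 0) = 0 := by
          apply Nat.choose_eq_zero_of_lt; omega
        rw [h1]; push_cast; ring
      · intro h; simp at h
    · obtain ⟨m', rfl⟩ : ∃ m', m = m' + 1 := ⟨m - 1, by omega⟩
      obtain ⟨n', rfl⟩ : ∃ n', n = n' + 1 := ⟨n - 1, by omega⟩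
      rw [Finset.sum_range_succ']
      have hsplit : ∀ i ∈ Finset.range (t+1),
          (-1:ℝ)^(i+1) * ((t+1).choose (i+1)) * ((n'+1-(i+1)).choose (n'+1-(m'+1)))
          = (-1:ℝ)^(i+1) * (t.choose (i+1)) * ((n'+1-(i+1)).choose (n'+1-(m'+1)))
            + (-((-1:ℝ)^i * (t.choose i) * ((n'-i).choose (n'-m')))) := by
        intro i _
        rw [Nat.choose_succ_succ, Nat.succ_sub_succ, Nat.succ_sub_succ]
        push_cast
        ring
      rw [Finset.sum_congr rfl hsplit, Finset.sum_add_distrib]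
      have h1 : (∑ i ∈ Finset.range (t+1),
            (-1:ℝ)^(i+1) * (t.choose (i+1)) * ((n'+1-(i+1)).choose (n'+1-(m'+1))))
          + (-1:ℝ)^0 * ((t+1).choose 0) * ((n'+1-0).choose (n'+1-(m'+1)))
          = ((n'+1-t).choose (m'+1) : ℝ) := by
        have : ((-1:ℝ)^0 * ((t+1).choose 0) * ((n'+1-0).choose (n'+1-(m'+1))))
            = (-1:ℝ)^0 * ((t).choose 0) * ((n'+1-0).choose (n'+1-(m'+1))) := by simp
        rw [this, ← Finset.sum_range_succ' (fun k => (-1:ℝ)^k * ((t).choose k) * ((n'+1-k).choose (n'+1-(m'+1)))) (t+1)]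
        rw [Finset.sum_range_succ]
        simp only [Nat.choose_succ_self, Nat.cast_zero, mul_zero, zero_mul, add_zero]
        exact ih (m'+1) (n'+1) hm (by omega)
      have h2 : (∑ i ∈ Finset.range (t+1),
            (-((-1:ℝ)^i * (t.choose i) * ((n'-i).choose (n'-m')))))
          = -(((n'-t).choose m' : ℝ)) := by
        rw [Finset.sum_neg_distrib]
        rw [ih m' n' (by omega) (by omega)]
      rw [add_right_comm, h1, h2]
      have hp : (n'+1-t) = (n'-t) + 1 := by omega
      rw [hp, Nat.succ_sub_succ, Nat.choose_succ_succ]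
      push_cast
      ring

private lemma lemAvar (m n t : ℕ) (hm : m+1 ≤ n) (ht : t ≤ n) :
    ∑ k ∈ Finset.Icc 1 (m+1), (-1:ℝ)^(k-1) * ((n-k).choose (n-(m+1))) * (t.choose k)
      = (n.choose (m+1) : ℝ) - ((n-t).choose (m+1)) := by
  have base := lemA t (m+1) n hm ht
  have pad : ∑ k ∈ Finset.range (n+1), (-1:ℝ)^k * (t.choose k) * ((n-k).choose (n-(m+1)))
      = ((n-t).choose (m+1) : ℝ) := by
    rw [← base]
    apply padsum _ (by omega)
    intro k hk _
    have h1 : t.choose k = 0 := Nat.choose_eq_zero_of_lt (by omega)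
    rw [h1]; push_cast; ring
  rw [Finset.sum_range_succ'] at pad
  have h0 : (-1:ℝ)^0 * (t.choose 0) * ((n-0).choose (n-(m+1))) = (n.choose (m+1) : ℝ) := by
    have : n - (m+1) ≤ n := by omega
    rw [show (n-0) = n from rfl, show n.choose (n-(m+1)) = n.choose (m+1) by
      rw [show n - (m+1) = n - (m+1) from rfl, ← Nat.choose_symm hm]]
    simp
  rw [h0] at pad
  rw [← Finset.Ico_add_one_right_eq_Icc, Finset.sum_Ico_eq_sum_range]
  have hconv : ∀ i ∈ Finset.range (m+1+1-1), (-1:ℝ)^((1+i)-1) * ((n-(1+i)).choose (n-(m+1))) * (t.choose (1+i))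
      = -((-1:ℝ)^(i+1) * (t.choose (i+1)) * ((n-(i+1)).choose (n-(m+1)))) := by
    intro i _
    rw [show (1+i)-1 = i from by omega, show 1+i = i+1 from by omega]
    ring
  rw [Finset.sum_congr rfl hconv, Finset.sum_neg_distrib]
  have hpad2 : ∑ i ∈ Finset.range n, (-1:ℝ)^(i+1) * (t.choose (i+1)) * ((n-(i+1)).choose (n-(m+1)))
      = ∑ i ∈ Finset.range (m+1+1-1), (-1:ℝ)^(i+1) * (t.choose (i+1)) * ((n-(i+1)).choose (n-(m+1))) := by
    apply padsum _ (by omega)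
    intro k hk hk'
    have h1 : (n-(k+1)).choose (n-(m+1)) = 0 := Nat.choose_eq_zero_of_lt (by omega)
    rw [h1]; push_cast; ring
  rw [← hpad2]
  linarith [pad]

private lemma lemB (m n t : ℕ) (hm : m+1 ≤ n) (ht : t ≤ n) :
    ∑ k ∈ Finset.Icc 1 (m+1), (-1:ℝ)^(k-1) * k * ((n-k).choose (n-(m+1))) * (t.choose k)
      = (t : ℝ) * ((n-t).choose m) := by
  cases t with
  | zero =>
    rw [Finset.sum_eq_zero]
    · simp
    · intro k hk
      rw [Finset.mem_Icc] at hk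
      rw [Nat.choose_eq_zero_of_lt (by omega : 0 < k)]
      push_cast; ring
  | succ s =>
    have base := lemA s m (n-1) (by omega) (by omega)
    rw [← Finset.Ico_add_one_right_eq_Icc, Finset.sum_Ico_eq_sum_range]
    have hconv : ∀ i ∈ Finset.range (m+1+1-1),
        (-1:ℝ)^((1+i)-1) * (1+i : ℕ) * ((n-(1+i)).choose (n-(m+1))) * ((s+1).choose (1+i))
        = ((s:ℝ)+1) * ((-1:ℝ)^i * (s.choose i) * (((n-1)-i).choose ((n-1)-m))) := by
      intro i _
      rw [show (1+i)-1 = i from by omega, show 1+i = i+1 from by omega,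
        show n-(i+1) = (n-1)-i from by omega, show n-(m+1) = (n-1)-m from by omega]
      have hc : (s+1).choose (i+1) * (i+1) = (s+1) * s.choose i := by
        rw [← Nat.add_one_mul_choose_eq]
      have hcr : ((s+1).choose (i+1) : ℝ) * ((i:ℝ)+1) = ((s:ℝ)+1) * (s.choose i) := by
        exact_mod_cast congrArg (Nat.cast : ℕ → ℝ) hc
      push_cast
      linear_combination ((-1:ℝ)^i * (((n-1)-i).choose ((n-1)-m) : ℝ)) * hcr
    rw [Finset.sum_congr rfl hconv, ← Finset.mul_sum]
    have hpad : ∑ i ∈ Finset.range (m+1+1-1), (-1:ℝ)^i * (s.choose i) * (((n-1)-i).choose ((n-1)-m))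
        = ∑ i ∈ Finset.range (s+1), (-1:ℝ)^i * (s.choose i) * (((n-1)-i).choose ((n-1)-m)) := by
      have e1 : ∑ i ∈ Finset.range n, (-1:ℝ)^i * (s.choose i) * (((n-1)-i).choose ((n-1)-m))
          = ∑ i ∈ Finset.range (m+1+1-1), (-1:ℝ)^i * (s.choose i) * (((n-1)-i).choose ((n-1)-m)) := by
        apply padsum _ (by omega)
        intro k hk _
        rw [Nat.choose_eq_zero_of_lt (show (n-1)-k < (n-1)-m by omega)]
        push_cast; ring
      have e2 : ∑ i ∈ Finset.range n, (-1:ℝ)^i * (s.choose i) * (((n-1)-i).choose ((n-1)-m))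
          = ∑ i ∈ Finset.range (s+1), (-1:ℝ)^i * (s.choose i) * (((n-1)-i).choose ((n-1)-m)) := by
        apply padsum _ (by omega)
        intro k hk _
        rw [Nat.choose_eq_zero_of_lt (show s < k by omega)]
        push_cast; ring
      rw [← e1, e2]
    rw [hpad, base, show (n-1)-s = n-(s+1) from by omega]
    push_cast; ring

noncomputable def Fc (n m t : ℕ) : ℝ :=
  (∑ k ∈ Finset.Icc 1 m, (-1 : ℝ) ^ (k - 1) *
      ((m.choose k : ℝ) / (n.choose k : ℝ)) *
      (((n : ℝ) * k - ((m : ℝ) + 1) * ((k : ℝ) - 1)) / ((m : ℝ) - (k : ℝ) + 1)) * (t.choose k)) +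
    (-1 : ℝ) ^ m * (((m : ℝ) + 1) / (n.choose m : ℝ)) * (t.choose (m+1))

private lemma keyF (n m t : ℕ) (hm : m+1 ≤ n) (ht : t ≤ n) :
    (((n:ℝ) - m) * (n.choose m)) * Fc n m t
      = ((m:ℝ)+1) * (n.choose (m+1)) - ((m:ℝ)+1) * ((n-t).choose (m+1))
        + ((n:ℝ) - (m:ℝ) - 1) * t * ((n-t).choose m) := by
  have hcnm : (0:ℝ) < (n.choose m : ℝ) := by
    exact_mod_cast Nat.choose_pos (by omega : m ≤ n)
  unfold Fc
  rw [mul_add, Finset.mul_sum]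
  have hterm : ∀ k ∈ Finset.Icc 1 m,
      (((n:ℝ) - m) * (n.choose m)) * ((-1 : ℝ) ^ (k - 1) *
        ((m.choose k : ℝ) / (n.choose k : ℝ)) *
        (((n : ℝ) * k - ((m : ℝ) + 1) * ((k : ℝ) - 1)) / ((m : ℝ) - (k : ℝ) + 1)) * (t.choose k))
      = (-1:ℝ)^(k-1) * (((k:ℝ) * ((n:ℝ) - (m:ℝ) - 1) + ((m:ℝ)+1)) * ((n-k).choose (n-(m+1)))) * (t.choose k) := by
    intro k hk
    rw [Finset.mem_Icc] at hk
    obtain ⟨hk1, hk2⟩ := hk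
    have hcnk : (0:ℝ) < (n.choose k : ℝ) := by
      exact_mod_cast Nat.choose_pos (by omega : k ≤ n)
    have hden : (0:ℝ) < (m:ℝ) - (k:ℝ) + 1 := by
      have : (k:ℝ) ≤ (m:ℝ) := by exact_mod_cast hk2
      linarith
    -- fact1 : C(n,m) * C(m,k) = C(n,k) * C(n-k, m-k)
    have f1 : (n.choose m : ℝ) * (m.choose k) = (n.choose k) * ((n-k).choose (m-k)) := by
      exact_mod_cast congrArg (Nat.cast : ℕ → ℝ) (Nat.choose_mul (n := n) hk2)
    -- fact2 : C(n-k, m-k+1) * ((m-k)+1) = C(n-k, m-k) * (n-m)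
    have f2n : (n-k).choose ((m-k)+1) * ((m-k)+1) = (n-k).choose (m-k) * ((n-k) - (m-k)) :=
      Nat.choose_succ_right_eq (n-k) (m-k)
    have e1 : (n-k) - (m-k) = n - m := by omega
    have e2 : ((m-k : ℕ) : ℝ) = (m:ℝ) - (k:ℝ) := by
      rw [Nat.cast_sub hk2]
    have e3 : ((n-m : ℕ) : ℝ) = (n:ℝ) - (m:ℝ) := by
      rw [Nat.cast_sub (by omega : m ≤ n)]
    have f2 : ((n-k).choose ((m-k)+1) : ℝ) * ((m:ℝ) - (k:ℝ) + 1)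
        = ((n-k).choose (m-k) : ℝ) * ((n:ℝ) - (m:ℝ)) := by
      have := congrArg (Nat.cast : ℕ → ℝ) f2n
      push_cast at this
      rw [e1] at f2n
      have := congrArg (Nat.cast : ℕ → ℝ) f2n
      push_cast at this
      rw [e2, e3] at this
      linarith [this]
    -- fact3 : C(n-k, n-(m+1)) = C(n-k, (m-k)+1)
    have f3 : ((n-k).choose (n-(m+1)) : ℝ) = ((n-k).choose ((m-k)+1) : ℝ) := by
      have : (n-k) - ((m-k)+1) = n - (m+1) := by omega
      rw [← this, Nat.choose_symm (by omega : (m-k)+1 ≤ n-k)]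
    have hBA : (m.choose k : ℝ) / (n.choose k : ℝ) = ((n-k).choose (m-k) : ℝ) / (n.choose m : ℝ) := by
      rw [div_eq_div_iff (ne_of_gt hcnk) (ne_of_gt hcnm)]
      linarith [f1]
    have hE : ((n-k).choose ((m-k)+1) : ℝ) = ((n-k).choose (m-k) : ℝ) * ((n:ℝ) - (m:ℝ)) / ((m:ℝ) - (k:ℝ) + 1) := by
      rw [eq_div_iff (by linarith)]
      linarith [f2]
    rw [f3, hE, hBA]
    field_simp
    ring
  rw [Finset.sum_congr rfl hterm]
  have hlast : (((n:ℝ) - m) * (n.choose m)) * ((-1 : ℝ) ^ m * (((m : ℝ) + 1) / (n.choose m : ℝ)) * (t.choose (m+1)))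
      = (-1:ℝ)^((m+1)-1) * ((((m+1:ℕ):ℝ) * ((n:ℝ) - (m:ℝ) - 1) + ((m:ℝ)+1)) * ((n-(m+1)).choose (n-(m+1)))) * (t.choose (m+1)) := by
    rw [show (m+1)-1 = m from by omega, Nat.choose_self]
    push_cast
    field_simp
    ring
  rw [hlast, ← Finset.sum_Icc_succ_top (by omega : 1 ≤ m+1)
    (fun k => (-1:ℝ)^(k-1) * (((k:ℝ) * ((n:ℝ) - (m:ℝ) - 1) + ((m:ℝ)+1)) * ((n-k).choose (n-(m+1)))) * (t.choose k))]
  have hsplit : ∀ k ∈ Finset.Icc 1 (m+1),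
      (-1:ℝ)^(k-1) * (((k:ℝ) * ((n:ℝ) - (m:ℝ) - 1) + ((m:ℝ)+1)) * ((n-k).choose (n-(m+1)))) * (t.choose k)
      = ((n:ℝ) - (m:ℝ) - 1) * ((-1:ℝ)^(k-1) * k * ((n-k).choose (n-(m+1))) * (t.choose k))
        + ((m:ℝ)+1) * ((-1:ℝ)^(k-1) * ((n-k).choose (n-(m+1))) * (t.choose k)) := by
    intro k _; ring
  rw [Finset.sum_congr rfl hsplit, Finset.sum_add_distrib, ← Finset.mul_sum, ← Finset.mul_sum,
    lemB m n t hm ht, lemAvar m n t hm ht]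
  ring

private lemma natmul (n m t : ℕ) (hm : m+1 ≤ n) (ht : t ≤ n) :
    t * ((n-t).choose m) ≤ (n-m) * (n.choose m) := by
  by_cases h : n - t < m
  · rw [Nat.choose_eq_zero_of_lt h]; simp
  · exact Nat.mul_le_mul (by omega) (Nat.choose_le_choose m (by omega))

private lemma Fb (n m t : ℕ) (hm : m+1 ≤ n) (ht1 : 1 ≤ t) (ht : t ≤ n) :
    Fc n m t ≤ (n:ℝ) - m := by
  have key := keyF n m t hm ht
  have hcnm : (0:ℝ) < (n.choose m : ℝ) := by
    exact_mod_cast Nat.choose_pos (by omega : m ≤ n)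
  have hmn : (m:ℝ) + 1 ≤ (n:ℝ) := by exact_mod_cast hm
  have hnm : (0:ℝ) < (n:ℝ) - m := by linarith
  have h1 : ((m:ℝ)+1) * (n.choose (m+1)) = ((n:ℝ)-m) * (n.choose m) := by
    have h := congrArg (Nat.cast : ℕ → ℝ) (Nat.choose_succ_right_eq n m)
    push_cast at h
    rw [Nat.cast_sub (by omega : m ≤ n)] at h
    linarith
  have h2 : (0:ℝ) ≤ ((m:ℝ)+1) * ((n-t).choose (m+1)) := by positivity
  have h3 : ((t:ℝ)) * (((n-t).choose m : ℕ) : ℝ) ≤ ((n:ℝ)-m) * (n.choose m) := by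
    have h := natmul n m t hm ht
    have h' := (Nat.cast_le (α := ℝ)).2 h
    push_cast at h'
    rw [Nat.cast_sub (by omega : m ≤ n)] at h'
    exact h'
  have h4 : (0:ℝ) ≤ (n:ℝ) - (m:ℝ) - 1 := by linarith
  have h5 : (((n:ℝ) - m) * (n.choose m)) * Fc n m t ≤ (((n:ℝ) - m) * (n.choose m)) * ((n:ℝ)-m) := by
    rw [key]
    nlinarith [mul_le_mul_of_nonneg_left h3 h4]
  exact le_of_mul_le_mul_left h5 (mul_pos hnm hcnm)

private lemma F0 (n m : ℕ) : Fc n m 0 = 0 := by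
  unfold Fc
  rw [Finset.sum_eq_zero, Nat.choose_eq_zero_of_lt (by omega : 0 < m+1)]
  · simp
  · intro k hk
    rw [Finset.mem_Icc] at hk
    rw [Nat.choose_eq_zero_of_lt (by omega : 0 < k)]
    push_cast; ring

theorem galambos_xu_lower_analogue {Ω : Type*} [MeasurableSpace Ω]
    (μ : Measure Ω) [IsProbabilityMeasure μ] (n m : ℕ) (hm : m + 1 ≤ n)
    (A : Fin n → Set Ω) (hA : ∀ i, MeasurableSet (A i)) :
    (μ (⋃ i, A i)).toReal ≥
      (1 / ((n : ℝ) - m)) *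
        ((∑ k ∈ Icc 1 m, (-1 : ℝ) ^ (k - 1) *
            ((m.choose k : ℝ) / (n.choose k : ℝ)) *
            (((n : ℝ) * k - (m + 1) * (k - 1)) / ((m : ℝ) - k + 1)) *
            ∑ I ∈ powersetCard k (univ : Finset (Fin n)), (μ (⋂ i ∈ I, A i)).toReal) +
          (-1 : ℝ) ^ m * (((m : ℝ) + 1) / (n.choose m : ℝ)) *
            ∑ I ∈ powersetCard (m + 1) (univ : Finset (Fin n)),
              (μ (⋂ i ∈ I, A i)).toReal) := by
  classical
  set atom : Finset (Fin n) → Set Ω := fun T => ⋂ i, (if i ∈ T then A i else (A i)ᶜ) with hatom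
  have hmem_atom : ∀ (ω : Ω) (T : Finset (Fin n)), ω ∈ atom T ↔ ∀ i, ω ∈ A i ↔ i ∈ T := by
    intro ω T
    simp only [hatom, Set.mem_iInter]
    constructor
    · intro h i
      have := h i
      by_cases hi : i ∈ T <;> simp [hi] at this ⊢ <;> tauto
    · intro h i
      by_cases hi : i ∈ T
      · simpa [hi] using (h i).2 hi
      · simp only [hi, if_false, Set.mem_compl_iff]
        exact fun hω => hi ((h i).1 hω)
  have hmeas : ∀ T, MeasurableSet (atom T) := by
    intro T
    apply MeasurableSet.iInter
    intro i
    by_cases hi : i ∈ T <;> simp [hi, hA i, (hA i).compl]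
  have hdisj : ∀ T T' : Finset (Fin n), T ≠ T' → Disjoint (atom T) (atom T') := by
    intro T T' hne
    rw [Set.disjoint_left]
    intro ω h1 h2
    apply hne
    ext i
    rw [← (hmem_atom ω T).1 h1 i, ← (hmem_atom ω T').1 h2 i]
  have hself : ∀ ω : Ω, ω ∈ atom (univ.filter (fun i => ω ∈ A i)) := by
    intro ω
    rw [hmem_atom]
    intro i
    simp
  have hsum : ∀ s : Finset (Finset (Fin n)),
      (μ (⋃ T ∈ s, atom T)).toReal = ∑ T ∈ s, (μ (atom T)).toReal := by
    intro s
    rw [measure_biUnion_finset (fun T _ T' _ h => hdisj T T' h) (fun T _ => hmeas T)]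
    exact ENNReal.toReal_sum (fun T _ => measure_ne_top μ _)
  have hI : ∀ I : Finset (Fin n), (μ (⋂ i ∈ I, A i)).toReal
      = ∑ T ∈ univ.filter (fun T => I ⊆ T), (μ (atom T)).toReal := by
    intro I
    have hset : (⋂ i ∈ I, A i) = ⋃ T ∈ univ.filter (fun T : Finset (Fin n) => I ⊆ T), atom T := by
      ext ω
      simp only [Set.mem_iInter, Set.mem_iUnion, Finset.mem_filter, Finset.mem_univ, true_and,
        exists_prop]
      constructor
      · intro h
        exact ⟨univ.filter (fun i => ω ∈ A i), fun i hi => by simp [h i hi], hself ω⟩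
      · rintro ⟨T, hIT, hω⟩ i hi
        exact ((hmem_atom ω T).1 hω i).2 (hIT hi)
    rw [hset, hsum]
  have hU : (μ (⋃ i, A i)).toReal
      = ∑ T ∈ univ.filter (fun T : Finset (Fin n) => T ≠ ∅), (μ (atom T)).toReal := by
    have hset : (⋃ i, A i) = ⋃ T ∈ univ.filter (fun T : Finset (Fin n) => T ≠ ∅), atom T := by
      ext ω
      simp only [Set.mem_iUnion, Finset.mem_filter, Finset.mem_univ, true_and, exists_prop]
      constructor
      · rintro ⟨i, hi⟩
        refine ⟨univ.filter (fun j => ω ∈ A j), ?_, hself ω⟩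
        intro hemp
        have hmem : i ∈ univ.filter (fun j => ω ∈ A j) := by simp [hi]
        rw [hemp] at hmem
        simp at hmem
      · rintro ⟨T, hT, hω⟩
        obtain ⟨i, hi⟩ := Finset.nonempty_iff_ne_empty.2 hT
        exact ⟨i, ((hmem_atom ω T).1 hω i).2 hi⟩
    rw [hset, hsum]
  have hS : ∀ k : ℕ, ∑ I ∈ powersetCard k (univ : Finset (Fin n)), (μ (⋂ i ∈ I, A i)).toReal
      = ∑ T ∈ (univ : Finset (Finset (Fin n))), (T.card.choose k : ℝ) * (μ (atom T)).toReal := by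
    intro k
    simp_rw [hI, Finset.sum_filter]
    rw [Finset.sum_comm]
    refine Finset.sum_congr rfl (fun T _ => ?_)
    rw [← Finset.sum_filter, Finset.sum_const, nsmul_eq_mul]
    congr 2
    have hfe : (powersetCard k (univ : Finset (Fin n))).filter (fun I => I ⊆ T)
        = powersetCard k T := by
      ext I
      simp only [Finset.mem_filter, Finset.mem_powersetCard]
      exact ⟨fun h => ⟨h.2, h.1.2⟩, fun h => ⟨⟨Finset.subset_univ I, h.2⟩, h.1⟩⟩
    rw [hfe, Finset.card_powersetCard]
  rw [ge_iff_le, hU]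
  simp_rw [hS, Finset.mul_sum]
  rw [Finset.sum_comm, ← Finset.sum_add_distrib, Finset.mul_sum]
  have hnm : (0:ℝ) < (n:ℝ) - m := by
    have : (m:ℝ) + 1 ≤ (n:ℝ) := by exact_mod_cast hm
    linarith
  have hper : ∀ T ∈ (univ : Finset (Finset (Fin n))),
      (1 / ((n : ℝ) - m)) *
        ((∑ k ∈ Icc 1 m, (-1 : ℝ) ^ (k - 1) *
            ((m.choose k : ℝ) / (n.choose k : ℝ)) *
            (((n : ℝ) * k - ((m:ℝ) + 1) * ((k:ℝ) - 1)) / ((m : ℝ) - k + 1)) *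
            ((T.card.choose k : ℝ) * (μ (atom T)).toReal)) +
          (-1 : ℝ) ^ m * (((m : ℝ) + 1) / (n.choose m : ℝ)) *
            ((T.card.choose (m+1) : ℝ) * (μ (atom T)).toReal))
      = (1 / ((n : ℝ) - m)) * Fc n m T.card * (μ (atom T)).toReal := by
    intro T _
    have h1 : ∀ k ∈ Icc 1 m, (-1 : ℝ) ^ (k - 1) *
            ((m.choose k : ℝ) / (n.choose k : ℝ)) *
            (((n : ℝ) * k - ((m:ℝ) + 1) * ((k:ℝ) - 1)) / ((m : ℝ) - k + 1)) *
            ((T.card.choose k : ℝ) * (μ (atom T)).toReal)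
        = ((-1 : ℝ) ^ (k - 1) *
            ((m.choose k : ℝ) / (n.choose k : ℝ)) *
            (((n : ℝ) * k - ((m:ℝ) + 1) * ((k:ℝ) - 1)) / ((m : ℝ) - k + 1)) *
            (T.card.choose k : ℝ)) * (μ (atom T)).toReal := fun k _ => by ring
    rw [Finset.sum_congr rfl h1, ← Finset.sum_mul]
    unfold Fc
    ring
  rw [Finset.sum_congr rfl hper]
  have hzero : ∀ T ∈ (univ : Finset (Finset (Fin n))),
      (1 / ((n : ℝ) - m)) * Fc n m T.card * (μ (atom T)).toReal ≠ 0 → T ≠ ∅ := by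
    intro T _ h hemp
    rw [hemp] at h
    simp [F0] at h
  rw [← Finset.sum_filter_of_ne hzero]
  apply Finset.sum_le_sum
  intro T hT
  rw [Finset.mem_filter] at hT
  have hc1 : 1 ≤ T.card := Finset.card_pos.2 (Finset.nonempty_iff_ne_empty.2 hT.2)
  have hc2 : T.card ≤ n := by
    have := Finset.card_le_univ T
    simpa using this
  have hFb := Fb n m T.card hm hc1 hc2
  have hp : 0 ≤ (μ (atom T)).toReal := ENNReal.toReal_nonneg
  have hk : (1 / ((n:ℝ) - m)) * Fc n m T.card ≤ 1 := by
    rw [div_mul_eq_mul_div, one_mul, div_le_one hnm]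
    exact hFb
  calc (1 / ((n:ℝ) - m)) * Fc n m T.card * (μ (atom T)).toReal
      ≤ 1 * (μ (atom T)).toReal := mul_le_mul_of_nonneg_right hk hp
    _ = (μ (atom T)).toReal := one_mul _
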